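/- With F, v, Γ, α₁,…,αₙ as above (values negative, classes independent in Γ/2Γ) and φ = ⟨⟨α₁,…,α_{n−1},αₙ]], the image v̄(D(φ)) of the nonzero value set of φ under F× → Γ/2Γ is exactly the 𝔽₂-subspace of Γ/2Γ spanned by v̄(α₁),…,v̄(αₙ). -/

import Mathlib

/-- The subfield of squares `F²` of a field of characteristic 2. -/
def sqSubfield (F : Type*) [Field F] [CharP F 2] : Subfield F where
  carrier := {x | ∃ y : F, y ^ 2 = x}
  mul_mem' := by rintro a b ⟨y, rfl⟩ ⟨z, rfl⟩; exact ⟨y * z, by ring⟩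
  one_mem' := ⟨1, one_pow 2⟩
  add_mem' := by
    rintro a b ⟨y, rfl⟩ ⟨z, rfl⟩
    exact ⟨y + z, by rw [add_sq]; linear_combination (y*z) * (CharP.cast_eq_zero F 2)⟩
  zero_mem' := ⟨0, by ring⟩
  neg_mem' := by rintro a ⟨y, rfl⟩; exact ⟨y, (CharTwo.neg_eq _).symm⟩
  inv_mem' := by rintro a ⟨y, rfl⟩; exact ⟨y⁻¹, by rw [inv_pow]⟩

/-- The monomial `β₁^{d₁} ⋯ βₙ^{dₙ}`. -/
def mono {R : Type*} [CommRing R] {n : ℕ} (β : Fin n → R) (d : Fin n → Bool) : R :=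
  ∏ i, if d i then β i else 1

/-- The diagonal bilinear `n`-fold Pfister form `⟨⟨β₁,…,βₙ⟩⟩_b`. -/
def bPf (F : Type*) [Field F] {n : ℕ} (β : Fin n → F) (v w : (Fin n → Bool) → F) : F :=
  ∑ d, mono β d * v d * w d

/-- Pure part of the bilinear Pfister form. -/
def bPfPure (F : Type*) [Field F] {n : ℕ} (β : Fin n → F)
    (v w : {d : Fin n → Bool // d ≠ fun _ => false} → F) : F :=
  ∑ d, mono β d.1 * v d * w d

/-- Anisotropy of a bilinear form. -/
def BAniso (F : Type*) [Field F] {V : Type*} [AddCommGroup V] [Module F V]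
    (B : V → V → F) : Prop :=
  ∀ v : V, v ≠ 0 → B v v ≠ 0

/-- Isometry of bilinear forms. -/
def BilinIsom (F : Type*) [Field F] {V W : Type*} [AddCommGroup V] [Module F V]
    [AddCommGroup W] [Module F W] (B₁ : V → V → F) (B₂ : W → W → F) : Prop :=
  ∃ e : V ≃ₗ[F] W, ∀ v w, B₂ (e v) (e w) = B₁ v w

/-- Isometry of quadratic forms (given as value functions). -/
def QuadIsom (F : Type*) [Field F] {V W : Type*} [AddCommGroup V] [Module F V]
    [AddCommGroup W] [Module F W] (q₁ : V → F) (q₂ : W → F) : Prop :=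
  ∃ e : V ≃ₗ[F] W, ∀ v, q₂ (e v) = q₁ v

/-- The quadratic Pfister form `⟨⟨β₁,…,β_m, a]]` as a value function. -/
def qPf (R : Type*) [CommRing R] {m : ℕ} (β : Fin m → R) (a : R)
    (x : (Fin m → Bool) → R × R) : R :=
  ∑ e, mono β e * ((x e).1 ^ 2 + (x e).1 * (x e).2 + a * (x e).2 ^ 2)

/-- Minimal index where `d` is `true`. -/
noncomputable def minIdx {n : ℕ} (d : Fin n → Bool) (hd : d ≠ fun _ => false) : Fin n :=
  (Finset.univ.filter fun i => d i = true).min' (by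
    obtain ⟨i, hi⟩ := Function.ne_iff.mp hd
    exact ⟨i, Finset.mem_filter.mpr ⟨Finset.mem_univ i, by simpa using hi⟩⟩)

/-- Remove the `ℓ`-th entry from a tuple. -/
def removeIdx {R : Type*} {n : ℕ} (α : Fin n → R) (ℓ : Fin n) (i : Fin (n - 1)) : R :=
  if h : (i : ℕ) < (ℓ : ℕ) then α ⟨i, by omega⟩ else α ⟨(i : ℕ) + 1, by omega⟩

/-- First `n-1` entries of a tuple. -/
def front {R : Type*} {n : ℕ} (α : Fin n → R) (i : Fin (n - 1)) : R :=
  α ⟨i, by omega⟩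

/-- Last entry of a tuple (junk value `0` if the tuple is empty). -/
def qlast {R : Type*} [CommRing R] {n : ℕ} (α : Fin n → R) : R :=
  if h : n = 0 then 0 else α ⟨n - 1, by omega⟩

set_option linter.unusedSectionVars false
section aux
variable {F Γ : Type*} [Field F] [CharP F 2] [AddCommGroup Γ] [LinearOrder Γ] [IsOrderedAddMonoid Γ] (v : F → Γ)

theorem my_vone (hmul : ∀ x y : F, x ≠ 0 → y ≠ 0 → v (x * y) = v x + v y) : v 1 = 0 := by
  have h := hmul 1 1 one_ne_zero one_ne_zero
  rw [mul_one] at h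
  exact left_eq_add.mp h

theorem my_vadd
    (hadd : ∀ x y : F, x ≠ 0 → y ≠ 0 → x + y ≠ 0 → min (v x) (v y) ≤ v (x + y))
    {x y : F} (hx : x ≠ 0) (hy : y ≠ 0) (hlt : v x < v y) :
    x + y ≠ 0 ∧ v (x + y) = v x := by
  have hne : x + y ≠ 0 := by
    intro h
    have hyx : y = x := by
      have h2 := eq_neg_of_add_eq_zero_right h
      rwa [CharTwo.neg_eq] at h2
    rw [hyx] at hlt; exact lt_irrefl _ hlt
  refine ⟨hne, ?_⟩
  have h1 : min (v x) (v y) ≤ v (x + y) := hadd x y hx hy hne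
  have hxx : (x + y) + y = x := by rw [add_assoc, CharTwo.add_self_eq_zero, add_zero]
  have h2 : min (v (x + y)) (v y) ≤ v x := by
    have h3 := hadd (x + y) y hne hy (by rw [hxx]; exact hx)
    rwa [hxx] at h3
  have hle : v x ≤ v (x + y) := le_trans (le_of_eq (min_eq_left hlt.le).symm) h1
  rcases min_cases (v (x + y)) (v y) with ⟨hm, _⟩ | ⟨hm, _⟩
  · exact le_antisymm (hm ▸ h2) hle
  · exact absurd (hm ▸ h2) (not_le.mpr hlt)

theorem my_sum_pos
    (hadd : ∀ x y : F, x ≠ 0 → y ≠ 0 → x + y ≠ 0 → min (v x) (v y) ≤ v (x + y))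
    {ι : Type*} [DecidableEq ι] (s : Finset ι) (f : ι → F) (g : Γ)
    (hf : ∀ j ∈ s, f j ≠ 0 → g < v (f j)) :
    (∑ j ∈ s, f j) = 0 ∨ ((∑ j ∈ s, f j) ≠ 0 ∧ g < v (∑ j ∈ s, f j)) := by
  induction s using Finset.induction_on with
  | empty => simp
  | insert _ _ ha ih =>
    rename_i a s
    rw [Finset.sum_insert ha]
    by_cases hfa : f a = 0
    · rw [hfa, zero_add]
      exact ih (fun j hj => hf j (Finset.mem_insert_of_mem hj))
    · have hga := hf a (Finset.mem_insert_self _ _) hfa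
      rcases ih (fun j hj => hf j (Finset.mem_insert_of_mem hj)) with h0 | ⟨hne, hg⟩
      · rw [h0, add_zero]; exact Or.inr ⟨hfa, hga⟩
      · by_cases hsum : f a + ∑ j ∈ s, f j = 0
        · exact Or.inl hsum
        · exact Or.inr ⟨hsum, lt_of_lt_of_le (lt_min hga hg) (hadd _ _ hfa hne hsum)⟩

theorem my_sum_min
    (hadd : ∀ x y : F, x ≠ 0 → y ≠ 0 → x + y ≠ 0 → min (v x) (v y) ≤ v (x + y))
    {ι : Type*} [DecidableEq ι] (s : Finset ι) (f : ι → F) (i₀ : ι) (hi : i₀ ∈ s)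
    (h0 : f i₀ ≠ 0)
    (hlt : ∀ j ∈ s, j ≠ i₀ → f j ≠ 0 → v (f i₀) < v (f j)) :
    (∑ j ∈ s, f j) ≠ 0 ∧ v (∑ j ∈ s, f j) = v (f i₀) := by
  rw [← Finset.add_sum_erase s f hi]
  rcases my_sum_pos v hadd (s.erase i₀) f (v (f i₀))
      (fun j hj hfj => hlt j (Finset.mem_of_mem_erase hj) (Finset.ne_of_mem_erase hj) hfj)
    with h0' | ⟨hne, hg⟩
  · rw [h0', add_zero]; exact ⟨h0, rfl⟩
  · exact my_vadd v hadd h0 hne hg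

theorem my_vprod (hmul : ∀ x y : F, x ≠ 0 → y ≠ 0 → v (x * y) = v x + v y)
    {ι : Type*} [DecidableEq ι] (s : Finset ι) (f : ι → F) (hf : ∀ i ∈ s, f i ≠ 0) :
    (∏ i ∈ s, f i) ≠ 0 ∧ v (∏ i ∈ s, f i) = ∑ i ∈ s, v (f i) := by
  induction s using Finset.induction_on with
  | empty => simpa using my_vone v hmul
  | insert _ _ ha ih =>
    rename_i a s
    rw [Finset.prod_insert ha, Finset.sum_insert ha]
    have h1 := hf _ (Finset.mem_insert_self _ _)
    obtain ⟨h2, h3⟩ := ih (fun i hi => hf i (Finset.mem_insert_of_mem hi))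
    exact ⟨mul_ne_zero h1 h2, by rw [hmul _ _ h1 h2, h3]⟩

end aux

/-- under the same hypotheses, the image of the nonzero value set
`D(φ)` of `φ = ⟨⟨α₁,…,α_{n-1},αₙ]]` in `Γ/2Γ` is exactly the `𝔽₂`-span of the
classes of `v(α₁),…,v(αₙ)` (an element of `Γ` lies in the span iff it is
`∑_{i ∈ c} v(αᵢ) + 2h` for some `c : {0,1}ⁿ`, `h ∈ Γ`). -/
theorem stmt_11 (F Γ : Type*) [Field F] [CharP F 2]
    [AddCommGroup Γ] [LinearOrder Γ] [IsOrderedAddMonoid Γ] (v : F → Γ)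
    (hmul : ∀ x y : F, x ≠ 0 → y ≠ 0 → v (x * y) = v x + v y)
    (hadd : ∀ x y : F, x ≠ 0 → y ≠ 0 → x + y ≠ 0 → min (v x) (v y) ≤ v (x + y))
    (hsurj : ∀ g : Γ, ∃ x : F, x ≠ 0 ∧ v x = g)
    (n : ℕ) (hn : 1 ≤ n) (α : Fin n → F) (hα0 : ∀ i, α i ≠ 0)
    (hneg : ∀ i, v (α i) < 0)
    (hind : ∀ c : Fin n → Bool, (∃ i, c i = true) →
      ∀ h : Γ, (∑ i, if c i then v (α i) else 0) ≠ 2 • h) :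
    (∀ x : (Fin (n - 1) → Bool) → F × F, qPf F (front α) (qlast α) x ≠ 0 →
      ∃ c : Fin n → Bool, ∃ h : Γ,
        v (qPf F (front α) (qlast α) x) = (∑ i, if c i then v (α i) else 0) + 2 • h) ∧
    (∀ c : Fin n → Bool, ∃ x : (Fin (n - 1) → Bool) → F × F,
      qPf F (front α) (qlast α) x ≠ 0 ∧ ∃ h : Γ,
        v (qPf F (front α) (qlast α) x) = (∑ i, if c i then v (α i) else 0) + 2 • h) := by
  classical
  obtain ⟨m, rfl⟩ : ∃ m, n = m + 1 := ⟨n - 1, by omega⟩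
  clear hn hsurj
  suffices H : (∀ x : (Fin m → Bool) → F × F,
      @qPf F _ m (fun i => α i.castSucc) (α (Fin.last m)) x ≠ 0 →
      ∃ c : Fin (m + 1) → Bool, ∃ h : Γ,
        v (@qPf F _ m (fun i => α i.castSucc) (α (Fin.last m)) x)
          = (∑ i, if c i then v (α i) else 0) + 2 • h) ∧
    (∀ c : Fin (m + 1) → Bool, ∃ x : (Fin m → Bool) → F × F,
      @qPf F _ m (fun i => α i.castSucc) (α (Fin.last m)) x ≠ 0 ∧ ∃ h : Γ,
        v (@qPf F _ m (fun i => α i.castSucc) (α (Fin.last m)) x)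
          = (∑ i, if c i then v (α i) else 0) + 2 • h) by
    exact H
  set β : Fin m → F := fun i => α i.castSucc with hβ
  set aℓ : F := α (Fin.last m) with haℓ
  have hlast0 : aℓ ≠ 0 := hα0 _
  have hvlast : v aℓ < 0 := hneg _
  -- v (aℓ) is not twice anything
  have hαodd : ∀ g : Γ, v aℓ ≠ 2 • g := by
    intro g hg
    refine hind (fun i => decide (i = Fin.last m)) ⟨Fin.last m, by simp⟩ g ?_
    rw [← hg, haℓ]
    simp
  -- distinct classes have distinct values mod 2
  have claimA : ∀ c c' : Fin (m + 1) → Bool, ∀ h h' : Γ, c ≠ c' →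
      (∑ i, if c i then v (α i) else 0) + 2 • h
        ≠ (∑ i, if c' i then v (α i) else 0) + 2 • h' := by
    intro c c' h h' hcc heq
    have hdne : ∃ i, (xor (c i) (c' i)) = true := by
      obtain ⟨i, hi⟩ := Function.ne_iff.mp hcc
      refine ⟨i, ?_⟩
      revert hi; cases c i <;> cases c' i <;> simp
    have key : (∑ i, if c i then v (α i) else 0)
        + 2 • (∑ i, if c' i && !(c i) then v (α i) else 0)
        = (∑ i, if c' i then v (α i) else 0)
          + (∑ i, if xor (c i) (c' i) then v (α i) else 0) := by
      simp only [two_smul, ← Finset.sum_add_distrib]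
      refine Finset.sum_congr rfl fun i _ => ?_
      cases hci : c i <;> cases hci' : c' i <;> simp [hci, hci']
    refine hind (fun i => xor (c i) (c' i)) hdne
      ((∑ i, if c' i && !(c i) then v (α i) else 0) + h' - h) ?_
    have hc2 : (∑ i, if c i then v (α i) else 0)
        = (∑ i, if c' i then v (α i) else 0) + 2 • h' - 2 • h := eq_sub_iff_add_eq.mpr heq
    have h3 : (∑ i, if c' i then v (α i) else 0)
          + (∑ i, if xor (c i) (c' i) then v (α i) else 0)
        = (∑ i, if c' i then v (α i) else 0)
          + 2 • ((∑ i, if c' i && !(c i) then v (α i) else 0) + h' - h) := by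
      rw [← key, hc2]
      abel
    exact add_left_cancel h3
  -- valuation of the rank-2 part
  have vP : ∀ a b : F, ¬(a = 0 ∧ b = 0) →
      a ^ 2 + a * b + aℓ * b ^ 2 ≠ 0 ∧
      ∃ t : Bool, ∃ h : Γ,
        v (a ^ 2 + a * b + aℓ * b ^ 2) = (if t then v aℓ else 0) + 2 • h := by
    intro a b hab
    by_cases hb : b = 0
    · have ha : a ≠ 0 := fun h' => hab ⟨h', hb⟩
      subst hb
      have hP : a ^ 2 + a * 0 + aℓ * 0 ^ 2 = a ^ 2 := by ring
      rw [hP]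
      refine ⟨pow_ne_zero _ ha, false, v a, ?_⟩
      rw [sq, hmul a a ha ha, two_smul]
      simp
    · by_cases ha : a = 0
      · subst ha
        have hP : (0 : F) ^ 2 + 0 * b + aℓ * b ^ 2 = aℓ * b ^ 2 := by ring
        rw [hP]
        have hb2 : b ^ 2 ≠ 0 := pow_ne_zero _ hb
        refine ⟨mul_ne_zero hlast0 hb2, true, v b, ?_⟩
        rw [hmul _ _ hlast0 hb2, sq, hmul b b hb hb, two_smul]
        simp
      · have hA : a ^ 2 ≠ 0 := pow_ne_zero _ ha
        have hB : aℓ * b ^ 2 ≠ 0 := mul_ne_zero hlast0 (pow_ne_zero _ hb)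
        have hC : a * b ≠ 0 := mul_ne_zero ha hb
        have hvA : v (a ^ 2) = 2 • v a := by rw [sq, hmul a a ha ha, two_smul]
        have hvB : v (aℓ * b ^ 2) = v aℓ + 2 • v b := by
          rw [hmul _ _ hlast0 (pow_ne_zero _ hb), sq, hmul b b hb hb, two_smul]
        have hvC : v (a * b) = v a + v b := hmul a b ha hb
        have hABne : v (a ^ 2) ≠ v (aℓ * b ^ 2) := by
          intro hEq
          apply hαodd (v a - v b)
          rw [hvA, hvB] at hEq
          rw [smul_sub, hEq]
          abel
        have hCgt : min (v (a ^ 2)) (v (aℓ * b ^ 2)) < v (a * b) := by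
          by_contra hle
          push_neg at hle
          have h1 : v (a * b) + v (a * b) ≤ v (a ^ 2) + v (aℓ * b ^ 2) :=
            add_le_add (hle.trans (min_le_left _ _)) (hle.trans (min_le_right _ _))
          have h2 : v (a ^ 2) + v (aℓ * b ^ 2) = v (a * b) + v (a * b) + v aℓ := by
            rw [hvA, hvB, hvC, two_smul, two_smul]; abel
          rw [h2] at h1
          have h3 : v (a * b) + v (a * b) + v aℓ < v (a * b) + v (a * b) := by
            simpa using add_lt_add_left hvlast (v (a * b) + v (a * b))
          exact absurd (h1.trans_lt h3) (lt_irrefl _)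
        rcases hABne.lt_or_gt with hAB | hAB
        · have hCgt' : v (a ^ 2) < v (a * b) := (min_eq_left hAB.le) ▸ hCgt
          obtain ⟨s1ne, s1v⟩ := my_vadd v hadd hA hC hCgt'
          obtain ⟨s2ne, s2v⟩ := my_vadd v hadd s1ne hB (by rw [s1v]; exact hAB)
          exact ⟨s2ne, false, v a, by rw [s2v, s1v, hvA]; simp⟩
        · have hCgt' : v (aℓ * b ^ 2) < v (a * b) := (min_eq_right hAB.le) ▸ hCgt
          obtain ⟨s1ne, s1v⟩ := my_vadd v hadd hB hC hCgt'
          have e1 : a ^ 2 + a * b + aℓ * b ^ 2 = aℓ * b ^ 2 + a * b + a ^ 2 := by ring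
          obtain ⟨s2ne, s2v⟩ := my_vadd v hadd s1ne hA (by rw [s1v]; exact hAB)
          rw [e1]
          exact ⟨s2ne, true, v b, by rw [s2v, s1v, hvB]; simp⟩
  -- valuation of monomials
  have vmono : ∀ e : Fin m → Bool, mono β e ≠ 0 ∧
      v (mono β e) = ∑ i : Fin m, if e i then v (α i.castSucc) else 0 := by
    intro e
    obtain ⟨h1, h2⟩ := my_vprod v hmul Finset.univ (fun i => if e i then β i else 1)
      (fun i _ => by
        cases he : e i
        · simp [he]
        · simpa [he, hβ] using hα0 i.castSucc)
    constructor
    · simpa [mono] using h1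
    · rw [mono, h2]
      refine Finset.sum_congr rfl fun i _ => ?_
      cases he : e i
      · simp [he, my_vone v hmul]
      · simp [he, hβ]
  -- sum over snoc classes
  have Ssnoc : ∀ (e : Fin m → Bool) (t : Bool),
      (∑ i : Fin (m + 1), if Fin.snoc (α := fun _ => Bool) e t i then v (α i) else 0)
        = (∑ i : Fin m, if e i then v (α i.castSucc) else 0) + (if t then v aℓ else 0) := by
    intro e t
    rw [Fin.sum_univ_castSucc]
    simp [haℓ]
  have snocinj : ∀ (e e' : Fin m → Bool) (t t' : Bool), e ≠ e' →
      (Fin.snoc e t : Fin (m + 1) → Bool) ≠ Fin.snoc e' t' := by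
    intro e e' t t' hee hsn
    apply hee
    funext i
    have h1 := congrFun hsn (Fin.castSucc i)
    simpa using h1
  -- the value of a single term of the Pfister form
  have hterm : ∀ (x : (Fin m → Bool) → F × F) (e : Fin m → Bool), x e ≠ 0 →
      mono β e * ((x e).1 ^ 2 + (x e).1 * (x e).2 + aℓ * (x e).2 ^ 2) ≠ 0 ∧
      ∃ t h, v (mono β e * ((x e).1 ^ 2 + (x e).1 * (x e).2 + aℓ * (x e).2 ^ 2))
        = (∑ i : Fin (m + 1), if Fin.snoc (α := fun _ => Bool) e t i then v (α i) else 0) + 2 • h := by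
    intro x e hxe
    have hab : ¬((x e).1 = 0 ∧ (x e).2 = 0) := by
      rintro ⟨h1, h2⟩
      exact hxe (Prod.ext h1 h2)
    obtain ⟨hPne, t, h, hPv⟩ := vP (x e).1 (x e).2 hab
    obtain ⟨hm0, hmv⟩ := vmono e
    refine ⟨mul_ne_zero hm0 hPne, t, h, ?_⟩
    rw [hmul _ _ hm0 hPne, hmv, hPv, Ssnoc e t]
    abel
  constructor
  · -- values of the form lie in the span
    intro x hx
    have hex : ∃ e, x e ≠ 0 := by
      by_contra hno
      push_neg at hno
      refine hx ?_
      simp only [qPf]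
      refine Finset.sum_eq_zero fun e _ => ?_
      rw [hno e]
      simp
    set g : (Fin m → Bool) → F :=
      fun e => mono β e * ((x e).1 ^ 2 + (x e).1 * (x e).2 + aℓ * (x e).2 ^ 2) with hg
    have hgzero : ∀ e, x e = 0 → g e = 0 := by
      intro e h'
      simp only [hg]
      rw [h']
      simp
    have hgt : ∀ e : Fin m → Bool, x e ≠ 0 → g e ≠ 0 ∧
        ∃ t h, v (g e)
          = (∑ i : Fin (m + 1), if Fin.snoc (α := fun _ => Bool) e t i then v (α i) else 0)
            + 2 • h := hterm x
    have hφ : qPf F β aℓ x = ∑ e, g e := by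
      simp only [hg]
      rfl
    have hne : (Finset.univ.filter fun e => g e ≠ 0).Nonempty := by
      obtain ⟨e, he⟩ := hex
      exact ⟨e, Finset.mem_filter.mpr ⟨Finset.mem_univ _, (hgt e he).1⟩⟩
    obtain ⟨e₀, he₀f, hmin⟩ := Finset.exists_min_image _ (fun e => v (g e)) hne
    have hg₀ : g e₀ ≠ 0 := (Finset.mem_filter.mp he₀f).2
    have hx₀ : x e₀ ≠ 0 := fun h' => hg₀ (hgzero e₀ h')
    obtain ⟨-, t₀, h₀, hv₀⟩ := hgt e₀ hx₀
    have hstrict : ∀ j ∈ (Finset.univ : Finset (Fin m → Bool)), j ≠ e₀ → g j ≠ 0 →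
        v (g e₀) < v (g j) := by
      intro j _ hj hgj
      have hxj : x j ≠ 0 := fun h' => hgj (hgzero j h')
      obtain ⟨-, t₁, h₁, hv₁⟩ := hgt j hxj
      refine lt_of_le_of_ne (hmin j (Finset.mem_filter.mpr ⟨Finset.mem_univ _, hgj⟩)) ?_
      intro hEq
      refine claimA _ _ h₀ h₁ (snocinj e₀ j t₀ t₁ (Ne.symm hj)) ?_
      rw [← hv₀, ← hv₁]
      exact hEq
    obtain ⟨hsne, hsv⟩ := my_sum_min v hadd Finset.univ g e₀ (Finset.mem_univ _) hg₀ hstrict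
    refine ⟨Fin.snoc (α := fun _ => Bool) e₀ t₀, h₀, ?_⟩
    rw [hφ, hsv, hv₀]
  · -- every class is attained
    intro c
    have hce : c = Fin.snoc (α := fun _ => Bool) (fun i => c i.castSucc) (c (Fin.last m)) := by
      funext i
      induction i using Fin.lastCases with
      | last => rw [Fin.snoc_last]
      | cast i => rw [Fin.snoc_castSucc]
    obtain ⟨hm0, hmv⟩ := vmono (fun i => c i.castSucc)
    cases hc : c (Fin.last m)
    · have hφx : qPf F β aℓ
          (fun e' => if e' = (fun i => c i.castSucc) then ((1 : F), (0 : F)) else 0)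
          = mono β (fun i => c i.castSucc) := by
        simp only [qPf]
        rw [Finset.sum_eq_single (fun i => c i.castSucc)]
        · rw [if_pos rfl]; simp
        · intro b _ hb; rw [if_neg hb]; simp
        · intro hmem; exact absurd (Finset.mem_univ _) hmem
      refine ⟨fun e' => if e' = (fun i => c i.castSucc) then ((1 : F), (0 : F)) else 0,
        ?_, 0, ?_⟩
      · rw [hφx]; exact hm0
      · rw [hφx, hmv]
        conv_rhs => rw [hce]
        rw [Ssnoc, hc]
        simp
    · have hφx : qPf F β aℓ
          (fun e' => if e' = (fun i => c i.castSucc) then ((0 : F), (1 : F)) else 0)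
          = mono β (fun i => c i.castSucc) * aℓ := by
        simp only [qPf]
        rw [Finset.sum_eq_single (fun i => c i.castSucc)]
        · rw [if_pos rfl]; simp
        · intro b _ hb; rw [if_neg hb]; simp
        · intro hmem; exact absurd (Finset.mem_univ _) hmem
      refine ⟨fun e' => if e' = (fun i => c i.castSucc) then ((0 : F), (1 : F)) else 0,
        ?_, 0, ?_⟩
      · rw [hφx]; exact mul_ne_zero hm0 hlast0
      · rw [hφx, hmul _ _ hm0 hlast0, hmv]
        conv_rhs => rw [hce]
        rw [Ssnoc, hc]
        simp
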